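/- arXiv:2112.10711 — 6 statements merged into one kernel-verified Lean document; each statement's English description precedes it below -/
import Mathlib

section
/- For every 0 < ε ≤ 1/2 and every A in S(ε), the matrix γ(A)A - I, where γ(A) = tr A / |A|² and I is the 2×2 identity, satisfies |γ(A)A - I| ≤ sqrt(1 - δ(ε)) in the Frobenius norm, with δ(ε) = 2ε(1-ε)/(ε² + (1-ε)²). -/
noncomputable def frob (A : Matrix (Fin 2) (Fin 2) ℝ) : ℝ :=
  Real.sqrt (∑ i, ∑ j, (A i j) ^ 2)

def Sset (s : ℝ) : Set (Matrix (Fin 2) (Fin 2) ℝ) :=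
  {A | A.PosSemidef ∧ A.trace = 1 ∧
    (A - s • (1 : Matrix (Fin 2) (Fin 2) ℝ)).PosSemidef}

/-- The scaling function `γ(A) = tr A / |A|²`. -/
noncomputable def gammaScale (A : Matrix (Fin 2) (Fin 2) ℝ) : ℝ :=
  A.trace / frob A ^ 2

theorem stmt4 (ε : ℝ) (hε : 0 < ε) (hε' : ε ≤ 1 / 2)
    (A : Matrix (Fin 2) (Fin 2) ℝ) (hA : A ∈ Sset ε) :
    frob (gammaScale A • A - (1 : Matrix (Fin 2) (Fin 2) ℝ)) ≤
      Real.sqrt (1 - 2 * ε * (1 - ε) / (ε ^ 2 + (1 - ε) ^ 2)) := by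
  obtain ⟨hpsd, htr, hpsd'⟩ := hA
  have hsym : A 1 0 = A 0 1 := by
    have := congrFun (congrFun hpsd.1 1) 0
    simpa [Matrix.conjTranspose_apply] using this.symm
  rw [Matrix.trace_fin_two] at htr
  have hquad : ∀ t : ℝ, 0 ≤ (A 0 0 - ε) * (t * t) + (2 * A 0 1) * t + (A 1 1 - ε) := by
    intro t
    have h2 := hpsd'.dotProduct_mulVec_nonneg ![t, 1]
    simp only [dotProduct, Matrix.mulVec, Fin.sum_univ_two, Matrix.sub_apply,
      Matrix.smul_apply, Matrix.one_apply, Matrix.cons_val_zero, Matrix.cons_val_one,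
      Matrix.head_cons, star_trivial, smul_eq_mul, Pi.star_apply, hsym] at h2
    norm_num at h2
    nlinarith [h2]
  have hdet : 0 ≤ (A 0 0 - ε) * (A 1 1 - ε) - A 0 1 * A 0 1 := by
    have := discrim_le_zero hquad
    rw [discrim] at this
    nlinarith
  set a := A 0 0 with ha
  set b := A 0 1 with hb
  set c := A 1 1 with hc
  set Q : ℝ := a ^ 2 + 2 * b ^ 2 + c ^ 2 with hQdef
  have hQ : frob A ^ 2 = Q := by
    rw [frob, Real.sq_sqrt (by positivity)]
    simp [Fin.sum_univ_two, hsym, hQdef]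
    ring
  have hQpos : (1 : ℝ) / 2 ≤ Q := by nlinarith [sq_nonneg (a - c), sq_nonneg b]
  have hE : (0 : ℝ) < ε ^ 2 + (1 - ε) ^ 2 := by nlinarith
  have hQE : Q ≤ ε ^ 2 + (1 - ε) ^ 2 := by nlinarith
  have hg : gammaScale A = 1 / Q := by
    rw [gammaScale, Matrix.trace_fin_two, htr, hQ]
  rw [frob]
  apply Real.sqrt_le_sqrt
  have h0Q : (0 : ℝ) < Q := by linarith
  simp only [Fin.sum_univ_two, Matrix.sub_apply, Matrix.smul_apply, Matrix.one_apply,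
    if_true, if_neg (by decide : (0 : Fin 2) ≠ 1), if_neg (by decide : (1 : Fin 2) ≠ 0),
    smul_eq_mul, hsym, hg]
  have hLHS : (1 / Q * a - 1) ^ 2 + (1 / Q * b - 0) ^ 2 + ((1 / Q * b - 0) ^ 2 +
      (1 / Q * c - 1) ^ 2) = 2 - 1 / Q := by
    field_simp
    nlinarith [sq_nonneg Q]
  rw [hLHS]
  have h1 : 1 / Q ≥ 1 / (ε ^ 2 + (1 - ε) ^ 2) := by
    apply one_div_le_one_div_of_le h0Q hQE
  have h2 : 2 - 1 / (ε ^ 2 + (1 - ε) ^ 2) ≤ 1 - 2 * ε * (1 - ε) / (ε ^ 2 + (1 - ε) ^ 2) := by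
    have heq : 2 * ε * (1 - ε) / (ε ^ 2 + (1 - ε) ^ 2) =
        1 / (ε ^ 2 + (1 - ε) ^ 2) - 1 := by
      field_simp
      ring
    linarith
  linarith
end

section
/- Let 0 < ε ≤ 1/2, x a point, f a nonnegative function, and define F_ε(f;x,M) = sup over A in S(ε) of (-A:M + 2·sqrt(f(x)·det A)). Then for all symmetric 2×2 matrices M and positive semidefinite symmetric N, one has ε|N| ≤ F_ε(f;x,M) - F_ε(f;x,M+N) ≤ sqrt(ε² + (1-ε)²)·|N|. -/
/-- Frobenius inner product `A : M`. -/
def finner (A M : Matrix (Fin 2) (Fin 2) ℝ) : ℝ :=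
  ∑ i, ∑ j, A i j * M i j

/-- `F_ε(f;x,M)` with `fx = f(x)`. -/
noncomputable def Feps (ε fx : ℝ) (M : Matrix (Fin 2) (Fin 2) ℝ) : ℝ :=
  sSup ((fun A => -(finner A M) + 2 * Real.sqrt (fx * A.det)) '' Sset ε)

lemma psd_facts {P : Matrix (Fin 2) (Fin 2) ℝ} (hP : P.PosSemidef) :
    P 1 0 = P 0 1 ∧ 0 ≤ P 0 0 ∧ 0 ≤ P 1 1 ∧ (P 0 1)^2 ≤ P 0 0 * P 1 1 := by
  have hsym : P 1 0 = P 0 1 := by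
    have h := congrFun (congrFun hP.1 0) 1
    simpa [Matrix.conjTranspose_apply] using h
  have key : ∀ s t : ℝ, 0 ≤ P 0 0 * (s * s) + (2 * P 0 1) * s * t + P 1 1 * (t * t) := by
    intro s t
    have h := hP.dotProduct_mulVec_nonneg ![s, t]
    simp [dotProduct, Matrix.mulVec, Fin.sum_univ_two, hsym] at h
    nlinarith [h]
  have h00 : 0 ≤ P 0 0 := by have := key 1 0; linarith
  have h11 : 0 ≤ P 1 1 := by have := key 0 1; linarith
  have hd : discrim (P 0 0) (2 * P 0 1) (P 1 1) ≤ 0 := by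
    apply discrim_le_zero
    intro x
    have := key x 1
    linarith
  rw [discrim] at hd
  exact ⟨hsym, h00, h11, by nlinarith [hd]⟩

lemma sset_facts {ε : ℝ} {A : Matrix (Fin 2) (Fin 2) ℝ} (hA : A ∈ Sset ε) :
    A 1 0 = A 0 1 ∧ A 0 0 + A 1 1 = 1 ∧ 0 ≤ A 0 0 - ε ∧ 0 ≤ A 1 1 - ε ∧
    (A 0 1)^2 ≤ (A 0 0 - ε) * (A 1 1 - ε) := by
  obtain ⟨hsym, -, -, -⟩ := psd_facts hA.1
  have htr : A 0 0 + A 1 1 = 1 := by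
    have := hA.2.1; rwa [Matrix.trace_fin_two] at this
  obtain ⟨h1, h2, h3, h4⟩ := psd_facts hA.2.2
  have e00 : (A - ε • (1 : Matrix (Fin 2) (Fin 2) ℝ)) 0 0 = A 0 0 - ε := by
    simp [Matrix.sub_apply, Matrix.one_apply]
  have e11 : (A - ε • (1 : Matrix (Fin 2) (Fin 2) ℝ)) 1 1 = A 1 1 - ε := by
    simp [Matrix.sub_apply, Matrix.one_apply]
  have e01 : (A - ε • (1 : Matrix (Fin 2) (Fin 2) ℝ)) 0 1 = A 0 1 := by
    simp [Matrix.sub_apply, Matrix.one_apply]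
  rw [e00] at h2
  rw [e11] at h3
  rw [e00, e11, e01] at h4
  exact ⟨hsym, htr, h2, h3, h4⟩

lemma finner_expand (A M : Matrix (Fin 2) (Fin 2) ℝ) :
    finner A M = A 0 0 * M 0 0 + A 0 1 * M 0 1 + A 1 0 * M 1 0 + A 1 1 * M 1 1 := by
  simp [finner, Fin.sum_univ_two]; ring

lemma frob_expand (A : Matrix (Fin 2) (Fin 2) ℝ) :
    frob A = Real.sqrt ((A 0 0)^2 + (A 0 1)^2 + (A 1 0)^2 + (A 1 1)^2) := by
  simp [frob, Fin.sum_univ_two]; ring_nf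

lemma finner_add (A M N : Matrix (Fin 2) (Fin 2) ℝ) :
    finner A (M + N) = finner A M + finner A N := by
  simp [finner_expand, Matrix.add_apply]; ring

lemma half_mem {ε : ℝ} (hε : 0 < ε) (hε' : ε ≤ 1/2) :
    ((1:ℝ)/2) • (1 : Matrix (Fin 2) (Fin 2) ℝ) ∈ Sset ε := by
  have hdiag : ∀ c : ℝ, c • (1 : Matrix (Fin 2) (Fin 2) ℝ)
      = Matrix.diagonal (fun _ => c) := by
    intro c; ext i j; simp [Matrix.one_apply, Matrix.diagonal_apply]
  refine ⟨?_, ?_, ?_⟩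
  · rw [hdiag]
    exact Matrix.PosSemidef.diagonal (fun _ => by simpa using (by norm_num : (0:ℝ) ≤ 1/2))
  · rw [Matrix.trace_fin_two]
    simp [Matrix.one_apply]
    norm_num
  · have h : ((1:ℝ)/2) • (1 : Matrix (Fin 2) (Fin 2) ℝ) - ε • 1
        = Matrix.diagonal (fun _ => 1/2 - ε) := by rw [← sub_smul, hdiag]
    rw [h]
    exact Matrix.PosSemidef.diagonal (fun _ => by simpa using (by linarith : (0:ℝ) ≤ 1/2 - ε))

lemma finner_lower {ε : ℝ} (hε : 0 < ε) {A N : Matrix (Fin 2) (Fin 2) ℝ}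
    (hA : A ∈ Sset ε) (hN : N.PosSemidef) : ε * frob N ≤ finner A N := by
  obtain ⟨hsymA, htr, haε, hbε, hcA⟩ := sset_facts hA
  obtain ⟨hsymN, hn0, hn1, hmN⟩ := psd_facts hN
  set a := A 0 0; set b := A 1 1; set c := A 0 1
  set n0 := N 0 0; set n1 := N 1 1; set m := N 0 1
  have hfr : frob N ≤ n0 + n1 := by
    rw [frob_expand, hsymN]
    have h1 : n0^2 + m^2 + m^2 + n1^2 ≤ (n0 + n1)^2 := by nlinarith
    calc Real.sqrt (n0^2 + m^2 + m^2 + n1^2) ≤ Real.sqrt ((n0+n1)^2) :=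
          Real.sqrt_le_sqrt h1
      _ = n0 + n1 := Real.sqrt_sq (by linarith)
  have hcore : 0 ≤ (a-ε)*n0 + (b-ε)*n1 + 2*c*m := by
    have hS : 0 ≤ (a-ε)*n0 + (b-ε)*n1 := add_nonneg (mul_nonneg haε hn0) (mul_nonneg hbε hn1)
    have h1 : c^2*m^2 ≤ ((a-ε)*(b-ε))*(n0*n1) :=
      mul_le_mul hcA hmN (sq_nonneg m) (mul_nonneg haε hbε)
    have hS2 : (2*c*m)^2 ≤ ((a-ε)*n0+(b-ε)*n1)^2 := by
      nlinarith [sq_nonneg ((a-ε)*n0 - (b-ε)*n1)]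
    nlinarith [hS, hS2]
  have hfin : finner A N = a*n0 + c*m + c*m + b*n1 := by
    rw [finner_expand, hsymA, hsymN]
  have : ε * frob N ≤ ε * (n0 + n1) := mul_le_mul_of_nonneg_left hfr (le_of_lt hε)
  rw [hfin]; nlinarith [this]

lemma finner_upper {ε : ℝ} (hε : 0 < ε) {A N : Matrix (Fin 2) (Fin 2) ℝ}
    (hA : A ∈ Sset ε) (hN : N.PosSemidef) :
    finner A N ≤ Real.sqrt (ε ^ 2 + (1 - ε) ^ 2) * frob N := by
  obtain ⟨hsymA, htr, haε, hbε, hcA⟩ := sset_facts hA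
  obtain ⟨hsymN, hn0, hn1, hmN⟩ := psd_facts hN
  set a := A 0 0; set b := A 1 1; set c := A 0 1
  set n0 := N 0 0; set n1 := N 1 1; set m := N 0 1
  have hfin : finner A N = a*n0 + 2*c*m + b*n1 := by
    rw [finner_expand, hsymA, hsymN]; ring
  have hP : (0:ℝ) ≤ a^2 + c^2 + c^2 + b^2 := by positivity
  have hQ : (0:ℝ) ≤ n0^2 + m^2 + m^2 + n1^2 := by positivity
  have hcs : (a*n0 + 2*c*m + b*n1)^2 ≤ (a^2+c^2+c^2+b^2)*(n0^2+m^2+m^2+n1^2) := by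
    nlinarith [sq_nonneg (a*m - c*n0), sq_nonneg (c*n1 - b*m), sq_nonneg (a*n1 - b*n0)]
  have step1 : finner A N ≤ Real.sqrt (a^2+c^2+c^2+b^2) * frob N := by
    rw [hfin, frob_expand, hsymN]
    calc a*n0 + 2*c*m + b*n1 ≤ |a*n0 + 2*c*m + b*n1| := le_abs_self _
      _ = Real.sqrt ((a*n0 + 2*c*m + b*n1)^2) := (Real.sqrt_sq_eq_abs _).symm
      _ ≤ Real.sqrt ((a^2+c^2+c^2+b^2)*(n0^2+m^2+m^2+n1^2)) := Real.sqrt_le_sqrt hcs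
      _ = Real.sqrt (a^2+c^2+c^2+b^2) * Real.sqrt (n0^2+m^2+m^2+n1^2) :=
          Real.sqrt_mul hP _
  have step2 : Real.sqrt (a^2+c^2+c^2+b^2) ≤ Real.sqrt (ε^2 + (1-ε)^2) := by
    apply Real.sqrt_le_sqrt
    nlinarith
  calc finner A N ≤ Real.sqrt (a^2+c^2+c^2+b^2) * frob N := step1
    _ ≤ Real.sqrt (ε^2 + (1-ε)^2) * frob N :=
        mul_le_mul_of_nonneg_right step2 (Real.sqrt_nonneg _)

lemma feps_bdd {ε fx : ℝ} (hε : 0 < ε) (hfx : 0 ≤ fx) (M : Matrix (Fin 2) (Fin 2) ℝ) :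
    BddAbove ((fun A => -(finner A M) + 2 * Real.sqrt (fx * A.det)) '' Sset ε) := by
  refine ⟨|M 0 0| + |M 0 1| + |M 1 0| + |M 1 1| + 2 * Real.sqrt fx, ?_⟩
  rintro y ⟨A, hA, rfl⟩
  obtain ⟨hsymA, htr, haε, hbε, hcA⟩ := sset_facts hA
  obtain ⟨-, ha0, hb0, hc0⟩ := psd_facts hA.1
  set a := A 0 0; set b := A 1 1; set c := A 0 1
  have ha1 : |a| ≤ 1 := by rw [abs_le]; constructor <;> linarith
  have hb1 : |b| ≤ 1 := by rw [abs_le]; constructor <;> linarith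
  have hc2 : c^2 ≤ 1 := by nlinarith
  have hc1 : |c| ≤ 1 := by rw [abs_le]; constructor <;> nlinarith
  have hbnd : ∀ u v : ℝ, |u| ≤ 1 → -(u*v) ≤ |v| := by
    intro u v h
    calc -(u*v) ≤ |u*v| := neg_le_abs _
      _ = |u| * |v| := abs_mul _ _
      _ ≤ 1 * |v| := mul_le_mul_of_nonneg_right h (abs_nonneg v)
      _ = |v| := one_mul _
  have hfin : -(finner A M) ≤ |M 0 0| + |M 0 1| + |M 1 0| + |M 1 1| := by
    rw [finner_expand, hsymA]
    have t1 := hbnd a (M 0 0) ha1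
    have t2 := hbnd c (M 0 1) hc1
    have t3 := hbnd c (M 1 0) hc1
    have t4 := hbnd b (M 1 1) hb1
    linarith
  have hdet : A.det ≤ 1 := by
    rw [Matrix.det_fin_two, hsymA]
    nlinarith
  have hsq : Real.sqrt (fx * A.det) ≤ Real.sqrt fx := by
    apply Real.sqrt_le_sqrt
    nlinarith
  show -(finner A M) + 2 * Real.sqrt (fx * A.det) ≤ _
  linarith
-- main

/-- Uniform ellipticity of the regularized operator. -/
theorem stmt5 (ε fx : ℝ) (hε : 0 < ε) (hε' : ε ≤ 1 / 2) (hfx : 0 ≤ fx)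
    (M N : Matrix (Fin 2) (Fin 2) ℝ) (hM : M.IsSymm) (hN : N.PosSemidef) :
    ε * frob N ≤ Feps ε fx M - Feps ε fx (M + N) ∧
    Feps ε fx M - Feps ε fx (M + N) ≤ Real.sqrt (ε ^ 2 + (1 - ε) ^ 2) * frob N := by
  have hne : (Sset ε).Nonempty := ⟨_, half_mem hε hε'⟩
  have hbdd1 := feps_bdd hε hfx M
  have hbdd2 := feps_bdd hε hfx (M + N)
  have hne1 : ((fun A => -(finner A M) + 2 * Real.sqrt (fx * A.det)) '' Sset ε).Nonempty :=
    hne.image _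
  have hne2 : ((fun A => -(finner A (M + N)) + 2 * Real.sqrt (fx * A.det)) '' Sset ε).Nonempty :=
    hne.image _
  have part1 : Feps ε fx (M + N) + ε * frob N ≤ Feps ε fx M := by
    rw [Feps, Feps]
    have h2 : sSup ((fun A => -(finner A (M + N)) + 2 * Real.sqrt (fx * A.det)) '' Sset ε)
        ≤ sSup ((fun A => -(finner A M) + 2 * Real.sqrt (fx * A.det)) '' Sset ε)
          - ε * frob N := by
      apply csSup_le hne2
      rintro y ⟨A, hA, rfl⟩
      have hle : -(finner A M) + 2 * Real.sqrt (fx * A.det)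
          ≤ sSup ((fun A => -(finner A M) + 2 * Real.sqrt (fx * A.det)) '' Sset ε) :=
        le_csSup hbdd1 ⟨A, hA, rfl⟩
      have hlow := finner_lower hε hA hN
      have hadd := finner_add A M N
      show -(finner A (M + N)) + 2 * Real.sqrt (fx * A.det) ≤ _
      linarith
    linarith
  have part2 : Feps ε fx M ≤ Feps ε fx (M + N) + Real.sqrt (ε ^ 2 + (1 - ε) ^ 2) * frob N := by
    rw [Feps, Feps]
    apply csSup_le hne1
    rintro y ⟨A, hA, rfl⟩
    have hle : -(finner A (M + N)) + 2 * Real.sqrt (fx * A.det)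
        ≤ sSup ((fun A => -(finner A (M + N)) + 2 * Real.sqrt (fx * A.det)) '' Sset ε) :=
      le_csSup hbdd2 ⟨A, hA, rfl⟩
    have hup := finner_upper hε hA hN
    have hadd := finner_add A M N
    show -(finner A M) + 2 * Real.sqrt (fx * A.det) ≤ _
    linarith
  constructor <;> linarith
end

section
/- For nonnegative reals a and b and 0 < ε ≤ 1/2, the values F_ε with data a and b satisfy, for every symmetric 2×2 matrix M, |sup_{A∈S(ε)}(-A:M + 2√(a·det A)) - sup_{A∈S(ε)}(-A:M + 2√(b·det A))| ≤ |√a - √b| ≤ √|a - b|. -/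
lemma quadform {A : Matrix (Fin 2) (Fin 2) ℝ} (h : A.PosSemidef) (c d : ℝ) :
    0 ≤ c * (A 0 0 * c + A 0 1 * d) + d * (A 1 0 * c + A 1 1 * d) := by
  have := h.dotProduct_mulVec_nonneg ![c, d]
  simp [dotProduct, Matrix.mulVec, Fin.sum_univ_two, Matrix.vecHead, Matrix.vecTail] at this
  nlinarith [this]

lemma symm_entries {A : Matrix (Fin 2) (Fin 2) ℝ} (h : A.PosSemidef) :
    A 1 0 = A 0 1 := by
  have := congrFun (congrFun h.1 1) 0
  simpa [Matrix.conjTranspose_apply] using this.symm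

lemma sset_facts_s7 {ε : ℝ} {A : Matrix (Fin 2) (Fin 2) ℝ} (h : A ∈ Sset ε) :
    0 ≤ A.det ∧ A.det ≤ 1 / 4 ∧ ∀ i j, |A i j| ≤ 1 := by
  obtain ⟨hpsd, htr, -⟩ := h
  have h10 : A 1 0 = A 0 1 := symm_entries hpsd
  have htr2 : A 0 0 + A 1 1 = 1 := by
    simpa [Matrix.trace_fin_two] using htr
  have hdet : A.det = A 0 0 * A 1 1 - A 0 1 * A 1 0 := Matrix.det_fin_two A
  have h1 := quadform hpsd 1 0
  have h2 := quadform hpsd 0 1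
  have h3 := quadform hpsd (A 1 1) (-(A 0 1))
  have h4 := quadform hpsd (A 0 1) (-(A 0 0))
  rw [h10] at h3 h4 hdet
  have e1 : 0 ≤ A 1 1 * (A 0 0 * A 1 1 - A 0 1 * A 0 1) := by nlinarith [h3]
  have e2 : 0 ≤ A 0 0 * (A 0 0 * A 1 1 - A 0 1 * A 0 1) := by nlinarith [h4]
  have hcomb : A 0 0 * (A 0 0 * A 1 1 - A 0 1 * A 0 1)
      + A 1 1 * (A 0 0 * A 1 1 - A 0 1 * A 0 1) = A 0 0 * A 1 1 - A 0 1 * A 0 1 := by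
    linear_combination (A 0 0 * A 1 1 - A 0 1 * A 0 1) * htr2
  have hd0 : 0 ≤ A 0 0 * A 1 1 - A 0 1 * A 0 1 := by linarith
  have hdnn : 0 ≤ A.det := by rw [hdet]; linarith
  have hdle : A.det ≤ 1 / 4 := by
    rw [hdet]
    nlinarith [sq_nonneg (A 0 0 - A 1 1), sq_nonneg (A 0 1)]
  refine ⟨hdnn, hdle, fun i j => ?_⟩
  have hq : A 0 1 * A 0 1 ≤ 1 / 4 := by
    nlinarith [sq_nonneg (A 0 0 - A 1 1)]
  have b00 : 0 ≤ A 0 0 ∧ A 0 0 ≤ 1 := by constructor <;> nlinarith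
  have b11 : 0 ≤ A 1 1 ∧ A 1 1 ≤ 1 := by constructor <;> nlinarith
  have hoff : |A 0 1| ≤ 1 := by
    rw [abs_le]; constructor <;> nlinarith
  fin_cases i <;> fin_cases j <;> simp only [Fin.mk_zero, Fin.mk_one, Fin.isValue]
  · rw [abs_le]; exact ⟨by linarith [b00.1], b00.2⟩
  · exact hoff
  · rw [h10]; exact hoff
  · rw [abs_le]; exact ⟨by linarith [b11.1], b11.2⟩

lemma sset_nonempty {ε : ℝ} (hε' : ε ≤ 1 / 2) : (Sset ε).Nonempty := by
  refine ⟨(1/2 : ℝ) • 1, ?_, ?_, ?_⟩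
  · rw [← Matrix.diagonal_one, ← Matrix.diagonal_smul]
    exact .diagonal (fun i => by norm_num)
  · simp [Matrix.trace_smul, Matrix.trace_one]
  · rw [← sub_smul, ← Matrix.diagonal_one, ← Matrix.diagonal_smul]
    exact .diagonal (fun i => by simpa using by linarith)

lemma key_bound {ε c : ℝ} (hc : 0 ≤ c) {A : Matrix (Fin 2) (Fin 2) ℝ} (hA : A ∈ Sset ε)
    (M : Matrix (Fin 2) (Fin 2) ℝ) :
    -(finner A M) + 2 * Real.sqrt (c * A.det) ≤
      |M 0 0| + |M 0 1| + |M 1 0| + |M 1 1| + Real.sqrt c := by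
  obtain ⟨hd0, hd4, hent⟩ := sset_facts_s7 hA
  have hs : Real.sqrt (c * A.det) = Real.sqrt c * Real.sqrt A.det := Real.sqrt_mul hc _
  have hsd : Real.sqrt A.det ≤ 1 / 2 := by
    rw [show (1:ℝ)/2 = Real.sqrt (1/4) by rw [show (1:ℝ)/4 = (1/2)^2 by norm_num,
      Real.sqrt_sq (by norm_num)]]
    exact Real.sqrt_le_sqrt hd4
  have h2 : 2 * Real.sqrt (c * A.det) ≤ Real.sqrt c := by
    rw [hs]
    nlinarith [Real.sqrt_nonneg c, Real.sqrt_nonneg A.det]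
  have hfin : -(finner A M) ≤ |M 0 0| + |M 0 1| + |M 1 0| + |M 1 1| := by
    have : finner A M = A 0 0 * M 0 0 + A 0 1 * M 0 1 + A 1 0 * M 1 0 + A 1 1 * M 1 1 := by
      simp [finner, Fin.sum_univ_two]; ring
    rw [this]
    have b00 := hent 0 0; have b01 := hent 0 1; have b10 := hent 1 0; have b11 := hent 1 1
    have e00 := abs_mul (A 0 0) (M 0 0) ▸ neg_abs_le (A 0 0 * M 0 0)
    nlinarith [abs_le.1 b00, abs_le.1 b01, abs_le.1 b10, abs_le.1 b11,
      abs_nonneg (M 0 0), abs_nonneg (M 0 1), abs_nonneg (M 1 0), abs_nonneg (M 1 1),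
      neg_abs_le (M 0 0), le_abs_self (M 0 0), neg_abs_le (M 0 1), le_abs_self (M 0 1),
      neg_abs_le (M 1 0), le_abs_self (M 1 0), neg_abs_le (M 1 1), le_abs_self (M 1 1)]
  linarith

lemma feps_le {ε a b : ℝ} (hε' : ε ≤ 1 / 2) (ha : 0 ≤ a) (hb : 0 ≤ b)
    (M : Matrix (Fin 2) (Fin 2) ℝ) :
    Feps ε a M ≤ Feps ε b M + |Real.sqrt a - Real.sqrt b| := by
  obtain ⟨A₀, hA₀⟩ := sset_nonempty hε'
  have hbddb : BddAbove ((fun A => -(finner A M) + 2 * Real.sqrt (b * A.det)) '' Sset ε) := by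
    refine ⟨|M 0 0| + |M 0 1| + |M 1 0| + |M 1 1| + Real.sqrt b, ?_⟩
    rintro x ⟨A, hA, rfl⟩
    exact key_bound hb hA M
  apply csSup_le (Set.Nonempty.image _ ⟨A₀, hA₀⟩)
  rintro x ⟨A, hA, rfl⟩
  obtain ⟨hd0, hd4, -⟩ := sset_facts_s7 hA
  have hdiff : 2 * Real.sqrt (a * A.det) ≤ 2 * Real.sqrt (b * A.det)
      + |Real.sqrt a - Real.sqrt b| := by
    rw [Real.sqrt_mul ha, Real.sqrt_mul hb]
    have hsd : Real.sqrt A.det ≤ 1 / 2 := by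
      rw [show (1:ℝ)/2 = Real.sqrt (1/4) by rw [show (1:ℝ)/4 = (1/2)^2 by norm_num,
        Real.sqrt_sq (by norm_num)]]
      exact Real.sqrt_le_sqrt hd4
    have hsd0 := Real.sqrt_nonneg A.det
    have : 2 * Real.sqrt a * Real.sqrt A.det - 2 * Real.sqrt b * Real.sqrt A.det
        = 2 * Real.sqrt A.det * (Real.sqrt a - Real.sqrt b) := by ring
    nlinarith [le_abs_self (Real.sqrt a - Real.sqrt b), neg_abs_le (Real.sqrt a - Real.sqrt b),
      abs_nonneg (Real.sqrt a - Real.sqrt b)]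
  have hle : -(finner A M) + 2 * Real.sqrt (a * A.det)
      ≤ (-(finner A M) + 2 * Real.sqrt (b * A.det)) + |Real.sqrt a - Real.sqrt b| := by
    linarith
  refine hle.trans (add_le_add_left ?_ _)
  exact le_csSup hbddb ⟨A, hA, rfl⟩

lemma sqrt_sub_sqrt {a b : ℝ} (hb : 0 ≤ b) (hab : b ≤ a) :
    Real.sqrt a - Real.sqrt b ≤ Real.sqrt (a - b) := by
  have h1 : a ≤ (Real.sqrt (a - b) + Real.sqrt b) ^ 2 := by
    have := Real.sq_sqrt (sub_nonneg.2 hab)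
    have := Real.sq_sqrt hb
    nlinarith [Real.sqrt_nonneg (a - b), Real.sqrt_nonneg b,
      mul_nonneg (Real.sqrt_nonneg (a - b)) (Real.sqrt_nonneg b)]
  have h2 := Real.sqrt_le_sqrt h1
  rw [Real.sqrt_sq (by positivity)] at h2
  linarith

theorem stmt7 (ε a b : ℝ) (hε : 0 < ε) (hε' : ε ≤ 1 / 2)
    (ha : 0 ≤ a) (hb : 0 ≤ b) (M : Matrix (Fin 2) (Fin 2) ℝ) (hM : M.IsSymm) :
    |Feps ε a M - Feps ε b M| ≤ |Real.sqrt a - Real.sqrt b| ∧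
    |Real.sqrt a - Real.sqrt b| ≤ Real.sqrt |a - b| := by
  constructor
  · rw [abs_sub_le_iff]
    constructor
    · linarith [feps_le hε' ha hb M]
    · rw [abs_sub_comm]
      linarith [feps_le hε' hb ha M]
  · rcases le_total b a with h | h
    · rw [abs_of_nonneg (sub_nonneg.2 (Real.sqrt_le_sqrt h)),
        abs_of_nonneg (sub_nonneg.2 h)]
      exact sqrt_sub_sqrt hb h
    · rw [abs_of_nonpos (sub_nonpos.2 (Real.sqrt_le_sqrt h)),
        abs_of_nonpos (sub_nonpos.2 h), neg_sub, neg_sub]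
      exact sqrt_sub_sqrt ha h
end

section
/- Let M be a 2×2 symmetric matrix, ζ > 0, and 0 < ε ≤ 1/2. Assume max over A in S(0) of (-A:M + ζ·sqrt(det A)) = 0. Then this maximum is attained at some A in the subset S(ε) if and only if |M|² ≤ ((1-ε)² + ε²)·ζ²/(4ε(1-ε)). -/
private lemma psd2 (a b c : ℝ) (h0 : 0 ≤ a) (h1 : 0 ≤ c) (hd : b ^ 2 ≤ a * c) :
    (Matrix.of ![![a, b], ![b, c]]).PosSemidef := by
  refine Matrix.PosSemidef.of_dotProduct_mulVec_nonneg ?_ ?_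
  · ext i j
    fin_cases i <;> fin_cases j <;> simp [Matrix.conjTranspose_apply]
  · intro x
    have hx : dotProduct (star x) (Matrix.mulVec (Matrix.of ![![a, b], ![b, c]]) x) =
        a * x 0 ^ 2 + 2 * b * (x 0 * x 1) + c * x 1 ^ 2 := by
      simp [dotProduct, Matrix.mulVec, Fin.sum_univ_two]
      ring
    rw [hx]
    rcases eq_or_lt_of_le h0 with h | h
    · have hb : b = 0 := by nlinarith [sq_nonneg b]
      rw [hb, ← h]
      nlinarith [sq_nonneg (x 1)]
    · nlinarith [sq_nonneg (a * x 0 + b * x 1), mul_nonneg (sub_nonneg.2 hd) (sq_nonneg (x 1))]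

private lemma psd2elim {A : Matrix (Fin 2) (Fin 2) ℝ} (h : A.PosSemidef) :
    A 1 0 = A 0 1 ∧ 0 ≤ A 0 0 ∧ 0 ≤ A 1 1 ∧ (A 0 1) ^ 2 ≤ A 0 0 * A 1 1 := by
  have hs : A 1 0 = A 0 1 := by
    have := (congrFun (congrFun h.1 1) 0).symm
    simpa [Matrix.conjTranspose_apply] using this
  have hq : ∀ x : Fin 2 → ℝ, 0 ≤ A 0 0 * x 0 ^ 2 + 2 * A 0 1 * (x 0 * x 1) + A 1 1 * x 1 ^ 2 := by
    intro x
    have := h.dotProduct_mulVec_nonneg x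
    have hx : dotProduct (star x) (Matrix.mulVec A x) =
        A 0 0 * x 0 ^ 2 + 2 * A 0 1 * (x 0 * x 1) + A 1 1 * x 1 ^ 2 := by
      simp [dotProduct, Matrix.mulVec, Fin.sum_univ_two, hs]
      ring
    linarith [hx ▸ this]
  have h00 : 0 ≤ A 0 0 := by have := hq ![1, 0]; norm_num at this; linarith
  have h11 : 0 ≤ A 1 1 := by have := hq ![0, 1]; norm_num at this; linarith
  refine ⟨hs, h00, h11, ?_⟩
  rcases eq_or_lt_of_le h00 with h0 | h0
  · have hb : A 0 1 = 0 := by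
      by_contra hb
      have := hq ![-(A 1 1 + 1) / (2 * A 0 1), 1]
      norm_num [← h0] at this
      field_simp at this
      nlinarith [sq_nonneg (A 0 1)]
    rw [hb, ← h0]
    norm_num
  · have := hq ![A 0 1, -(A 0 0)]
    norm_num at this
    nlinarith

private lemma claimC (p q r a b c : ℝ) (hp : 0 ≤ p) (hdM : 0 ≤ p * r - q ^ 2) :
    4 * (a * c - b ^ 2) * (p * r - q ^ 2) ≤ (a * p + 2 * b * q + c * r) ^ 2 := by
  rcases eq_or_lt_of_le hp with h0 | h0
  · have hq0 : q = 0 := by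
      rw [← h0] at hdM
      have h2 : q ^ 2 = 0 := le_antisymm (by nlinarith) (sq_nonneg q)
      exact sq_eq_zero_iff.mp h2
    rw [hq0, ← h0]
    norm_num
    nlinarith [sq_nonneg (c * r)]
  · nlinarith [sq_nonneg (p ^ 2 * a + 2 * p * q * b + q ^ 2 * c - (p * r - q ^ 2) * c),
      mul_nonneg hdM (sq_nonneg (p * b + q * c)), mul_pos h0 h0]


private lemma L_zeta4 (p q r ζ : ℝ) (hζ : 0 < ζ)
    (hkey : ∀ a b c : ℝ, 0 ≤ a → 0 ≤ c → b ^ 2 ≤ a * c → a + c = 1 →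
      ζ * Real.sqrt (a * c - b ^ 2) ≤ a * p + 2 * b * q + c * r)
    (hp0 : 0 ≤ p) (hr0 : 0 ≤ r) (hpr : q ^ 2 ≤ p * r) :
    ζ ^ 2 ≤ 4 * (p * r - q ^ 2) := by
  have hstep3 : ∀ δ : ℝ, 0 < δ →
      ζ ^ 2 ≤ 4 * (p * r - q ^ 2) + 4 * δ * (p + r) + 4 * δ ^ 2 := by
    intro δ hδ
    obtain ⟨t, ht_def⟩ : ∃ t : ℝ, t = p + r + 2 * δ := ⟨_, rfl⟩
    have ht : 0 < t := by rw [ht_def]; positivity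
    obtain ⟨D, hD_def⟩ : ∃ D : ℝ, D = (r + δ) * (p + δ) - q ^ 2 := ⟨_, rfl⟩
    have hD : 0 < D := by rw [hD_def]; nlinarith
    have h := hkey ((r + δ) / t) (-q / t) ((p + δ) / t)
      (by positivity) (by positivity)
      (by
        rw [div_mul_div_comm, neg_div, neg_sq, div_pow,
          div_le_div_iff₀ (by positivity) (by positivity)]
        nlinarith)
      (by rw [← add_div, div_eq_one_iff_eq ht.ne', ht_def]; ring)
    have harg : (r + δ) / t * ((p + δ) / t) - (-q / t) ^ 2 = D / t ^ 2 := by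
      rw [hD_def]; ring
    have hsq : Real.sqrt (D / t ^ 2) = Real.sqrt D / t := by
      rw [show D / t ^ 2 = (Real.sqrt D / t) ^ 2 by rw [div_pow, Real.sq_sqrt hD.le],
        Real.sqrt_sq (by positivity)]
    have hrhs : (r + δ) / t * p + 2 * (-q / t) * q + (p + δ) / t * r
        = (2 * (p * r - q ^ 2) + δ * (p + r)) / t := by ring
    rw [harg, hsq, hrhs, ← mul_div_assoc] at h
    have h2 := le_of_mul_le_mul_right ((div_le_div_iff₀ ht ht).mp h) ht
    have h3 : ζ * Real.sqrt D ≤ 2 * D := by nlinarith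
    have hw : 0 < Real.sqrt D := Real.sqrt_pos.2 hD
    have h4 : ζ ≤ 2 * Real.sqrt D := by
      have h5 : ζ * Real.sqrt D ≤ (2 * Real.sqrt D) * Real.sqrt D := by
        nlinarith [Real.mul_self_sqrt hD.le]
      exact le_of_mul_le_mul_right h5 hw
    nlinarith [Real.sq_sqrt hD.le, Real.sqrt_nonneg D, hζ.le]
  by_contra hcon
  push_neg at hcon
  have hτ0 : (0:ℝ) ≤ p + r := by linarith
  obtain ⟨c, hc_def⟩ : ∃ c : ℝ, c = ζ ^ 2 - 4 * (p * r - q ^ 2) := ⟨_, rfl⟩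
  have hcpos : 0 < c := by rw [hc_def]; linarith
  obtain ⟨δ, hδ_def⟩ : ∃ δ : ℝ, δ = min 1 (c / (8 * (p + r + 1))) := ⟨_, rfl⟩
  have hδ : 0 < δ := by rw [hδ_def]; exact lt_min one_pos (by positivity)
  have h := hstep3 δ hδ
  have h1 : δ ≤ 1 := by rw [hδ_def]; exact min_le_left _ _
  have h2 : δ ≤ c / (8 * (p + r + 1)) := by rw [hδ_def]; exact min_le_right _ _
  have h3 : δ * (8 * (p + r + 1)) ≤ c := by
    rw [← div_mul_cancel₀ c (by positivity : (8:ℝ) * (p + r + 1) ≠ 0)]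
    exact mul_le_mul_of_nonneg_right h2 (by positivity)
  nlinarith [mul_le_mul_of_nonneg_left h1 hδ.le, mul_nonneg hτ0 hδ.le, hc_def]

private lemma L_zetaEq (p q r ζ a₀ b₀ c₀ : ℝ) (hζ : 0 < ζ)
    (hp0 : 0 ≤ p) (hr0 : 0 ≤ r)
    (hζ4 : ζ ^ 2 ≤ 4 * (p * r - q ^ 2))
    (ha₀ : 0 ≤ a₀) (hc₀ : 0 ≤ c₀) (hd₀ : b₀ ^ 2 ≤ a₀ * c₀) (htr₀ : a₀ + c₀ = 1)
    (heq₀ : ζ * Real.sqrt (a₀ * c₀ - b₀ ^ 2) = a₀ * p + 2 * b₀ * q + c₀ * r) :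
    ζ ^ 2 = 4 * (p * r - q ^ 2) := by
  have hdM : 0 < p * r - q ^ 2 := by nlinarith [pow_pos hζ 2]
  have hpp : 0 < p := by
    rcases eq_or_lt_of_le hp0 with h | h
    · nlinarith [sq_nonneg q]
    · exact h
  have hrr : 0 < r := by
    rcases eq_or_lt_of_le hr0 with h | h
    · nlinarith [sq_nonneg q]
    · exact h
  have hT₀ : 0 < a₀ * p + 2 * b₀ * q + c₀ * r := by
    have hX : 0 < a₀ * p + c₀ * r := by
      rcases le_total a₀ (1 / 2) with h | h
      · nlinarith [mul_nonneg ha₀ hp0]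
      · nlinarith [mul_nonneg hc₀ hr0]
    rcases eq_or_ne b₀ 0 with hb | hb
    · rw [hb]; nlinarith
    · have hbsq : 0 < b₀ ^ 2 := by positivity
      nlinarith [sq_nonneg (a₀ * p - c₀ * r), mul_pos hdM hbsq,
        mul_le_mul_of_nonneg_left hd₀ (by positivity : (0:ℝ) ≤ 4 * (p * r)),
        mul_pos (mul_pos hpp hrr) hbsq]
  have hsp : 0 < Real.sqrt (a₀ * c₀ - b₀ ^ 2) := by
    rcases (Real.sqrt_nonneg (a₀ * c₀ - b₀ ^ 2)).lt_or_eq with h | h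
    · exact h
    · rw [← h, mul_zero] at heq₀; linarith
  have hdA₀ : 0 < a₀ * c₀ - b₀ ^ 2 := Real.sqrt_pos.mp hsp
  have hTsq : ζ ^ 2 * (a₀ * c₀ - b₀ ^ 2) = (a₀ * p + 2 * b₀ * q + c₀ * r) ^ 2 := by
    rw [← heq₀, mul_pow, Real.sq_sqrt hdA₀.le]
  have hC := claimC p q r a₀ b₀ c₀ hp0 hdM.le
  nlinarith [hC, hTsq, hdA₀, hζ4]


set_option maxHeartbeats 1000000 in
private lemma L_forward (p q r ζ ε a b c : ℝ) (hζ : 0 < ζ) (hε : 0 < ε) (hε' : ε ≤ 1 / 2)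
    (hkey : ∀ x y z : ℝ, 0 ≤ x → 0 ≤ z → y ^ 2 ≤ x * z → x + z = 1 →
      ζ * Real.sqrt (x * z - y ^ 2) ≤ x * p + 2 * y * q + z * r)
    (hp0 : 0 ≤ p) (hr0 : 0 ≤ r)
    (hEa : 0 ≤ a - ε) (hEc : 0 ≤ c - ε) (hEd : b ^ 2 ≤ (a - ε) * (c - ε))
    (hAtr : a + c = 1)
    (heqA : ζ * Real.sqrt (a * c - b ^ 2) = a * p + 2 * b * q + c * r) :
    4 * (ε * (1 - ε)) * (p + r) ^ 2 ≤ ζ ^ 2 := by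
  have hdAe : ε * (1 - ε) ≤ a * c - b ^ 2 := by nlinarith
  have hdApos : 0 < a * c - b ^ 2 := by nlinarith
  obtain ⟨u, hu_def⟩ : ∃ u : ℝ, u = Real.sqrt (a * c - b ^ 2) := ⟨_, rfl⟩
  have hu : u ^ 2 = a * c - b ^ 2 := by rw [hu_def]; exact Real.sq_sqrt hdApos.le
  have hupos : 0 < u := by rw [hu_def]; exact Real.sqrt_pos.2 hdApos
  have heq : ζ * u = a * p + 2 * b * q + c * r := by rw [hu_def]; exact heqA
  have hk0 : 4 * u ^ 2 ≤ 1 := by nlinarith [sq_nonneg (a - c), sq_nonneg b]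
  have hue : ε * (1 - ε) ≤ u ^ 2 := by rw [hu]; exact hdAe
  have hfam : ∀ s : ℝ, 0 < s → s ≤ ε → s ≤ u ^ 2 / 2 →
      2 * ζ * u * (p + r) ≤ ζ ^ 2 + s * (ζ ^ 2 + (p + r) ^ 2 - 4 * ζ * u * (p + r)) := by
    intro s hs hsε hsu
    have hX0 : 0 ≤ u ^ 2 - (1 - 4 * u ^ 2) * (s * (1 + s)) := by
      nlinarith [mul_nonneg (mul_nonneg hs.le (by linarith : (0:ℝ) ≤ 1 + s))
          (by positivity : (0:ℝ) ≤ 4 * u ^ 2),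
        mul_nonneg (by linarith : (0:ℝ) ≤ u ^ 2 / 2 - s) (by linarith : (0:ℝ) ≤ 1 + s),
        mul_nonneg (sq_nonneg u) (by linarith : (0:ℝ) ≤ 1 - s)]
    have ha0 : (0:ℝ) ≤ a := by linarith
    have hc0 : (0:ℝ) ≤ c := by linarith
    have harg : ((1 + 2 * s) * a - s) * ((1 + 2 * s) * c - s)
        - ((1 + 2 * s) * b) ^ 2 = u ^ 2 - (1 - 4 * u ^ 2) * (s * (1 + s)) := by
      rw [hu]
      linear_combination (-(s * (1 + 2 * s))) * hAtr
    have h := hkey ((1 + 2 * s) * a - s) ((1 + 2 * s) * b) ((1 + 2 * s) * c - s)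
      (by nlinarith [mul_nonneg hs.le ha0]) (by nlinarith [mul_nonneg hs.le hc0])
      (by linarith [harg, hX0]) (by linear_combination (1 + 2 * s) * hAtr)
    have hrhs : ((1 + 2 * s) * a - s) * p + 2 * ((1 + 2 * s) * b) * q
        + ((1 + 2 * s) * c - s) * r
        = (1 + 2 * s) * (ζ * u) - s * (p + r) := by
      rw [heq]; ring
    rw [harg, hrhs] at h
    have hR0 : 0 ≤ (1 + 2 * s) * (ζ * u) - s * (p + r) :=
      le_trans (mul_nonneg hζ.le (Real.sqrt_nonneg _)) h
    have hsq2 : ζ ^ 2 * (u ^ 2 - (1 - 4 * u ^ 2) * (s * (1 + s)))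
        ≤ ((1 + 2 * s) * (ζ * u) - s * (p + r)) ^ 2 := by
      have hmm := mul_le_mul h h (mul_nonneg hζ.le (Real.sqrt_nonneg _)) hR0
      nlinarith [hmm, Real.mul_self_sqrt hX0, sq_nonneg ζ]
    nlinarith [hsq2, hs, mul_pos hs hs]
  have hlim : 2 * ζ * u * (p + r) ≤ ζ ^ 2 := by
    by_contra hcon
    push_neg at hcon
    have hs₀ : 0 < min ε (u ^ 2 / 2) := lt_min hε (by positivity)
    rcases le_or_gt (ζ ^ 2 + (p + r) ^ 2 - 4 * ζ * u * (p + r)) 0 with hB | hB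
    · have h := hfam (min ε (u ^ 2 / 2)) hs₀ (min_le_left _ _) (min_le_right _ _)
      nlinarith [mul_nonneg hs₀.le (neg_nonneg.2 hB)]
    · obtain ⟨B, hB_def⟩ : ∃ B : ℝ, B = ζ ^ 2 + (p + r) ^ 2 - 4 * ζ * u * (p + r) := ⟨_, rfl⟩
      rw [← hB_def] at hB
      obtain ⟨s, hs_def⟩ : ∃ s : ℝ,
          s = min (min ε (u ^ 2 / 2)) ((2 * ζ * u * (p + r) - ζ ^ 2) / (2 * B)) := ⟨_, rfl⟩
      have hspos : 0 < s := by
        rw [hs_def]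
        exact lt_min hs₀ (div_pos (by linarith) (by linarith))
      have hs1 : s ≤ ε := by
        rw [hs_def]; exact le_trans (min_le_left _ _) (min_le_left _ _)
      have hs2 : s ≤ u ^ 2 / 2 := by
        rw [hs_def]; exact le_trans (min_le_left _ _) (min_le_right _ _)
      have h := hfam s hspos hs1 hs2
      have hsB : s * B ≤ (2 * ζ * u * (p + r) - ζ ^ 2) / 2 := by
        have hle : s ≤ (2 * ζ * u * (p + r) - ζ ^ 2) / (2 * B) := by
          rw [hs_def]; exact min_le_right _ _
        calc s * B ≤ (2 * ζ * u * (p + r) - ζ ^ 2) / (2 * B) * B :=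
              mul_le_mul_of_nonneg_right hle hB.le
          _ = (2 * ζ * u * (p + r) - ζ ^ 2) / 2 := by
              field_simp
      rw [← hB_def] at h
      linarith
  have h2uτ : 2 * u * (p + r) ≤ ζ := by nlinarith [hlim, hζ]
  have hnn : 0 ≤ 2 * u * (p + r) := by
    have : (0:ℝ) ≤ p + r := by linarith
    positivity
  have hmm := mul_le_mul h2uτ h2uτ hnn hζ.le
  nlinarith [hue, hmm, sq_nonneg (p + r)]

set_option maxHeartbeats 1000000 in
/-- Effect of the regularization: the maximum over `S(0)` is attained in `S(ε)`
iff `|M|² ≤ ((1-ε)² + ε²)ζ²/(4ε(1-ε))`. -/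
theorem stmt8 (M : Matrix (Fin 2) (Fin 2) ℝ) (hM : M.IsSymm)
    (ζ ε : ℝ) (hζ : 0 < ζ) (hε : 0 < ε) (hε' : ε ≤ 1 / 2)
    (hub : ∀ A ∈ Sset 0, -(finner A M) + ζ * Real.sqrt A.det ≤ 0)
    (hatt : ∃ A ∈ Sset 0, -(finner A M) + ζ * Real.sqrt A.det = 0) :
    (∃ A ∈ Sset ε, -(finner A M) + ζ * Real.sqrt A.det = 0) ↔
      frob M ^ 2 ≤ ((1 - ε) ^ 2 + ε ^ 2) * ζ ^ 2 / (4 * ε * (1 - ε)) := by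
  have hq : M 1 0 = M 0 1 := by
    have := congrFun (congrFun hM 0) 1
    simpa using this
  -- the main workhorse: hub evaluated at symmetric PSD matrices with trace one
  have key : ∀ a b c : ℝ, 0 ≤ a → 0 ≤ c → b ^ 2 ≤ a * c → a + c = 1 →
      ζ * Real.sqrt (a * c - b ^ 2) ≤ a * M 0 0 + 2 * b * M 0 1 + c * M 1 1 := by
    intro a b c h0 h1 hd ht
    have hmem : (Matrix.of ![![a, b], ![b, c]]) ∈ Sset 0 := by
      refine ⟨psd2 a b c h0 h1 hd, ?_, ?_⟩
      · rw [Matrix.trace_fin_two]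
        show a + c = 1
        exact ht
      · simpa using psd2 a b c h0 h1 hd
    have h := hub _ hmem
    have hfin : finner (Matrix.of ![![a, b], ![b, c]]) M
        = a * M 0 0 + 2 * b * M 0 1 + c * M 1 1 := by
      simp only [finner, Fin.sum_univ_two]
      show a * M 0 0 + b * M 0 1 + (b * M 1 0 + c * M 1 1) = _
      rw [hq]; ring
    have hdet : (Matrix.of ![![a, b], ![b, c]]).det = a * c - b ^ 2 := by
      rw [Matrix.det_fin_two]
      show a * c - b * b = a * c - b ^ 2
      ring
    rw [hfin, hdet] at h
    linarith
  -- nonnegativity facts about M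
  have hp0 : 0 ≤ M 0 0 := by
    have h := key 1 0 0 (by norm_num) (by norm_num) (by norm_num) (by norm_num)
    rw [show (1:ℝ) * 0 - 0 ^ 2 = 0 by ring, Real.sqrt_zero, mul_zero] at h
    linarith
  have hr0 : 0 ≤ M 1 1 := by
    have h := key 0 0 1 (by norm_num) (by norm_num) (by norm_num) (by norm_num)
    rw [show (0:ℝ) * 1 - 0 ^ 2 = 0 by ring, Real.sqrt_zero, mul_zero] at h
    linarith
  have hQ : ∀ x y : ℝ, 0 ≤ M 0 0 * x ^ 2 + 2 * M 0 1 * (x * y) + M 1 1 * y ^ 2 := by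
    intro x y
    rcases eq_or_lt_of_le (by positivity : (0:ℝ) ≤ x ^ 2 + y ^ 2) with hn | hn
    · have hx : x = 0 := by nlinarith [sq_nonneg x, sq_nonneg y]
      have hy : y = 0 := by nlinarith [sq_nonneg x, sq_nonneg y]
      simp [hx, hy]
    · obtain ⟨n, hn_def⟩ : ∃ n : ℝ, n = x ^ 2 + y ^ 2 := ⟨_, rfl⟩
      rw [← hn_def] at hn
      have h := key (x ^ 2 / n) (x * y / n) (y ^ 2 / n) (by positivity) (by positivity)
        (le_of_eq (by field_simp))
        (by rw [← add_div, hn_def]; rw [hn_def] at hn; exact div_self hn.ne')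
      have harg : x ^ 2 / n * (y ^ 2 / n) - (x * y / n) ^ 2 = 0 := by
        field_simp
        ring
      rw [harg, Real.sqrt_zero, mul_zero] at h
      have heq2 : x ^ 2 / n * M 0 0 + 2 * (x * y / n) * M 0 1 + y ^ 2 / n * M 1 1
          = (M 0 0 * x ^ 2 + 2 * M 0 1 * (x * y) + M 1 1 * y ^ 2) / n := by ring
      rw [heq2] at h
      have h2 := mul_le_mul_of_nonneg_right h hn.le
      rwa [zero_mul, div_mul_cancel₀ _ hn.ne'] at h2
  have hpr : M 0 1 ^ 2 ≤ M 0 0 * M 1 1 := by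
    rcases eq_or_lt_of_le hp0 with h0 | h0
    · have hq0 : M 0 1 = 0 := by
        by_contra hb
        have h := hQ (-(M 1 1 + 1) / (2 * M 0 1)) 1
        rw [← h0] at h
        field_simp at h
        rw [le_div_iff₀ (lt_of_le_of_ne (sq_nonneg _) (Ne.symm (pow_ne_zero 2 hb)))] at h
        nlinarith [sq_nonneg (M 0 1), lt_of_le_of_ne (sq_nonneg _) (Ne.symm (pow_ne_zero 2 hb))]
      rw [hq0, ← h0]
      norm_num
    · have h := hQ (M 0 1) (-(M 0 0))
      nlinarith
  have hζ4 : ζ ^ 2 ≤ 4 * (M 0 0 * M 1 1 - M 0 1 ^ 2) :=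
    L_zeta4 (M 0 0) (M 0 1) (M 1 1) ζ hζ key hp0 hr0 hpr
  have hdM : 0 < M 0 0 * M 1 1 - M 0 1 ^ 2 := by nlinarith [pow_pos hζ 2]
  have hpp : 0 < M 0 0 := by
    rcases eq_or_lt_of_le hp0 with h | h
    · nlinarith [sq_nonneg (M 0 1)]
    · exact h
  have hrr : 0 < M 1 1 := by
    rcases eq_or_lt_of_le hr0 with h | h
    · nlinarith [sq_nonneg (M 0 1)]
    · exact h
  have hτ : 0 < M 0 0 + M 1 1 := by linarith
  -- attainment forces ζ² = 4 det M
  have hζeq : ζ ^ 2 = 4 * (M 0 0 * M 1 1 - M 0 1 ^ 2) := by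
    obtain ⟨A₀, ⟨hA₀psd, hA₀tr, -⟩, hA₀eq⟩ := hatt
    obtain ⟨hb₀, ha₀, hc₀, hd₀⟩ := psd2elim hA₀psd
    rw [Matrix.trace_fin_two] at hA₀tr
    have hfin₀ : finner A₀ M = A₀ 0 0 * M 0 0 + 2 * A₀ 0 1 * M 0 1 + A₀ 1 1 * M 1 1 := by
      simp only [finner, Fin.sum_univ_two]
      rw [hq, hb₀]; ring
    have hdet₀ : A₀.det = A₀ 0 0 * A₀ 1 1 - A₀ 0 1 ^ 2 := by
      rw [Matrix.det_fin_two, hb₀]; ring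
    rw [hfin₀, hdet₀] at hA₀eq
    exact L_zetaEq (M 0 0) (M 0 1) (M 1 1) ζ (A₀ 0 0) (A₀ 0 1) (A₀ 1 1) hζ hp0 hr0 hζ4
      ha₀ hc₀ hd₀ hA₀tr (by linarith)
  have hfrob : frob M ^ 2 = M 0 0 ^ 2 + 2 * M 0 1 ^ 2 + M 1 1 ^ 2 := by
    have h1 : (0:ℝ) ≤ ∑ i, ∑ j, (M i j) ^ 2 := by positivity
    rw [frob, Real.sq_sqrt h1, Fin.sum_univ_two, Fin.sum_univ_two, Fin.sum_univ_two, hq]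
    ring
  have h4e : (0:ℝ) < 4 * ε * (1 - ε) := by nlinarith
  constructor
  · -- forward direction
    rintro ⟨A, ⟨hApsd, hAtr, hAε⟩, hAeq⟩
    obtain ⟨hbs, -, -, -⟩ := psd2elim hApsd
    rw [Matrix.trace_fin_two] at hAtr
    obtain ⟨-, hEa, hEc, hEd⟩ := psd2elim hAε
    have e00 : (A - ε • (1 : Matrix (Fin 2) (Fin 2) ℝ)) 0 0 = A 0 0 - ε := by
      simp [Matrix.sub_apply, Matrix.one_apply]
    have e11 : (A - ε • (1 : Matrix (Fin 2) (Fin 2) ℝ)) 1 1 = A 1 1 - ε := by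
      simp [Matrix.sub_apply, Matrix.one_apply]
    have e01 : (A - ε • (1 : Matrix (Fin 2) (Fin 2) ℝ)) 0 1 = A 0 1 := by
      simp [Matrix.sub_apply, Matrix.one_apply]
    rw [e00] at hEa
    rw [e11] at hEc
    rw [e00, e11, e01] at hEd
    have hfinA : finner A M = A 0 0 * M 0 0 + 2 * A 0 1 * M 0 1 + A 1 1 * M 1 1 := by
      simp only [finner, Fin.sum_univ_two]
      rw [hq, hbs]; ring
    have hdetA : A.det = A 0 0 * A 1 1 - A 0 1 ^ 2 := by
      rw [Matrix.det_fin_two, hbs]; ring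
    rw [hfinA, hdetA] at hAeq
    have hmain := L_forward (M 0 0) (M 0 1) (M 1 1) ζ ε (A 0 0) (A 0 1) (A 1 1)
      hζ hε hε' key hp0 hr0 hEa hEc hEd hAtr (by linarith)
    rw [hfrob, le_div_iff₀ h4e]
    nlinarith [hmain, mul_le_mul_of_nonneg_left hζ4 (by nlinarith : (0:ℝ) ≤ ε * (1 - ε))]
  · -- backward direction
    intro hbound
    rw [hfrob, le_div_iff₀ h4e] at hbound
    have he2 : ε * (1 - ε) * (M 0 0 + M 1 1) ^ 2 ≤ M 0 0 * M 1 1 - M 0 1 ^ 2 := by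
      nlinarith [hbound, hζeq]
    have hrτ : ε * (M 0 0 + M 1 1) ≤ M 1 1 := by
      by_contra hcon
      push_neg at hcon
      have h2 : 0 < (1 - ε) * (M 0 0 + M 1 1) - M 1 1 := by
        nlinarith [mul_nonneg (by linarith : (0:ℝ) ≤ 1 - 2 * ε) hτ.le]
      nlinarith [he2, sq_nonneg (M 0 1), mul_pos (sub_pos.2 hcon) h2]
    have hpτ : ε * (M 0 0 + M 1 1) ≤ M 0 0 := by
      by_contra hcon
      push_neg at hcon
      have h2 : 0 < (1 - ε) * (M 0 0 + M 1 1) - M 0 0 := by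
        nlinarith [mul_nonneg (by linarith : (0:ℝ) ≤ 1 - 2 * ε) hτ.le]
      nlinarith [he2, sq_nonneg (M 0 1), mul_pos (sub_pos.2 hcon) h2]
    obtain ⟨τ, hτ_def⟩ : ∃ τ : ℝ, τ = M 0 0 + M 1 1 := ⟨_, rfl⟩
    have hτpos : 0 < τ := by rw [hτ_def]; exact hτ
    refine ⟨Matrix.of ![![M 1 1 / τ, -(M 0 1) / τ], ![-(M 0 1) / τ, M 0 0 / τ]],
      ⟨?_, ?_, ?_⟩, ?_⟩
    · refine psd2 _ _ _ (by positivity) (by positivity) ?_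
      rw [div_mul_div_comm, neg_div, neg_sq, div_pow,
        div_le_div_iff₀ (by positivity) (by positivity)]
      nlinarith [hpr]
    · rw [Matrix.trace_fin_two]
      show M 1 1 / τ + M 0 0 / τ = 1
      rw [← add_div, div_eq_one_iff_eq hτpos.ne', hτ_def]
      ring
    · have hmeq : Matrix.of ![![M 1 1 / τ, -(M 0 1) / τ], ![-(M 0 1) / τ, M 0 0 / τ]]
          - ε • (1 : Matrix (Fin 2) (Fin 2) ℝ)
          = Matrix.of ![![M 1 1 / τ - ε, -(M 0 1) / τ], ![-(M 0 1) / τ, M 0 0 / τ - ε]] := by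
        ext i j
        fin_cases i <;> fin_cases j <;>
          simp [Matrix.sub_apply, Matrix.one_apply]
      rw [hmeq]
      refine psd2 _ _ _ ?_ ?_ ?_
      · rw [sub_nonneg, le_div_iff₀ hτpos, hτ_def]; linarith
      · rw [sub_nonneg, le_div_iff₀ hτpos, hτ_def]; linarith
      · have hkey2 : (M 1 1 / τ - ε) * (M 0 0 / τ - ε) - (-(M 0 1) / τ) ^ 2
            = (M 0 0 * M 1 1 - M 0 1 ^ 2 - ε * (1 - ε) * τ ^ 2) / τ ^ 2 := by
          rw [hτ_def]
          field_simp
          ring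
        have hnum : (0:ℝ) ≤ M 0 0 * M 1 1 - M 0 1 ^ 2 - ε * (1 - ε) * τ ^ 2 := by
          rw [hτ_def]; linarith [he2]
        nlinarith [hkey2, div_nonneg hnum (sq_nonneg τ), sq_nonneg (-(M 0 1) / τ)]
    · have hfin : finner (Matrix.of ![![M 1 1 / τ, -(M 0 1) / τ], ![-(M 0 1) / τ, M 0 0 / τ]]) M
          = 2 * (M 0 0 * M 1 1 - M 0 1 ^ 2) / τ := by
        simp only [finner, Fin.sum_univ_two]
        show M 1 1 / τ * M 0 0 + -(M 0 1) / τ * M 0 1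
          + (-(M 0 1) / τ * M 1 0 + M 0 0 / τ * M 1 1) = _
        rw [hq]
        ring
      have hdet : (Matrix.of ![![M 1 1 / τ, -(M 0 1) / τ], ![-(M 0 1) / τ, M 0 0 / τ]]).det
          = (M 0 0 * M 1 1 - M 0 1 ^ 2) / τ ^ 2 := by
        rw [Matrix.det_fin_two]
        show M 1 1 / τ * (M 0 0 / τ) - -(M 0 1) / τ * (-(M 0 1) / τ) = _
        ring
      rw [hfin, hdet]
      have hd2 : M 0 0 * M 1 1 - M 0 1 ^ 2 = (ζ / 2) ^ 2 := by nlinarith [hζeq]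
      rw [hd2, show (ζ / 2) ^ 2 / τ ^ 2 = (ζ / 2 / τ) ^ 2 by ring,
        Real.sqrt_sq (by positivity)]
      field_simp
      ring
end

section
/- Let ζ > 0 and define φ: [0,1] → ℝ by φ(t) = -t·ρ₁ - (1-t)·ρ₂ + ζ·sqrt(t(1-t)), where ρ₁, ρ₂ are real numbers. If max over t in [0,1] of φ(t) = 0, then the unique maximizer t̄ lies in the open interval (0,1) and satisfies ρ₁ = (1-t̄)ζ/(2·sqrt(t̄(1-t̄))) and ρ₂ = t̄·ζ/(2·sqrt(t̄(1-t̄))). -/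
/-- Helper: `ζ√(t(1-t)) ≤ t·ρ` for all `t ∈ [0,1]` is impossible when `ζ > 0`. -/
lemma stmt9_aux (ζ ρ : ℝ) (hζ : 0 < ζ)
    (h : ∀ t ∈ Set.Icc (0 : ℝ) 1, ζ * Real.sqrt (t * (1 - t)) ≤ t * ρ) : False := by
  have hd : (0:ℝ) < 2 * (ζ^2 + ρ^2) := by positivity
  set t := ζ^2 / (2 * (ζ^2 + ρ^2)) with ht
  have htdef : t * (2 * (ζ^2 + ρ^2)) = ζ^2 := div_mul_cancel₀ _ (ne_of_gt hd)
  have ht0 : 0 < t := by positivity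
  have ht2 : t ≤ 1/2 := by
    rw [ht, div_le_iff₀ hd]; nlinarith [sq_nonneg ρ]
  have hmem : t ∈ Set.Icc (0:ℝ) 1 := ⟨le_of_lt ht0, by linarith⟩
  have hle := h t hmem
  have hprod : 0 < t * (1 - t) := by nlinarith
  have hs : 0 < Real.sqrt (t * (1 - t)) := Real.sqrt_pos.2 hprod
  have hsq : Real.sqrt (t * (1 - t)) ^ 2 = t * (1 - t) :=
    Real.sq_sqrt (le_of_lt hprod)
  have hlhs : 0 < ζ * Real.sqrt (t * (1 - t)) := mul_pos hζ hs
  have hsqr : ζ^2 * (t * (1 - t)) ≤ (t * ρ)^2 := by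
    nlinarith [mul_self_le_mul_self (le_of_lt hlhs) hle]
  have h5 : t * ρ^2 = ζ^2/2 - t * ζ^2 := by nlinarith [htdef]
  have h6 : t * (t * ρ^2) = t * (ζ^2/2 - t * ζ^2) := by rw [h5]
  nlinarith [h6, hsqr, mul_pos ht0 (pow_pos hζ 2)]

/-- If the maximum of `φ(t) = -tρ₁ - (1-t)ρ₂ + ζ√(t(1-t))` over `[0,1]` is `0`,
then the unique maximizer lies in `(0,1)` and determines `ρ₁, ρ₂`. -/
theorem stmt9 (ζ ρ₁ ρ₂ : ℝ) (hζ : 0 < ζ)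
    (φ : ℝ → ℝ)
    (hφ : ∀ t, φ t = -t * ρ₁ - (1 - t) * ρ₂ + ζ * Real.sqrt (t * (1 - t)))
    (hub : ∀ t ∈ Set.Icc (0 : ℝ) 1, φ t ≤ 0)
    (hatt : ∃ t ∈ Set.Icc (0 : ℝ) 1, φ t = 0) :
    ∃ tb ∈ Set.Ioo (0 : ℝ) 1, φ tb = 0 ∧
      (∀ t ∈ Set.Icc (0 : ℝ) 1, φ t = 0 → t = tb) ∧
      ρ₁ = (1 - tb) * ζ / (2 * Real.sqrt (tb * (1 - tb))) ∧
      ρ₂ = tb * ζ / (2 * Real.sqrt (tb * (1 - tb))) := by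
  obtain ⟨tb, htb, hzero⟩ := hatt
  -- tb is interior
  have hIoo : tb ∈ Set.Ioo (0:ℝ) 1 := by
    constructor
    · rcases lt_or_eq_of_le htb.1 with h | h
      · exact h
      · exfalso
        have h0 := hzero
        rw [← h] at h0
        rw [hφ 0] at h0
        have hρ₂ : ρ₂ = 0 := by
          simp [Real.sqrt_zero] at h0; linarith
        apply stmt9_aux ζ ρ₁ hζ
        intro t ht
        have hle := hub t ht
        rw [hφ t, hρ₂] at hle
        linarith
    · rcases lt_or_eq_of_le htb.2 with h | h
      · exact h
      · exfalso
        have h0 := hzero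
        rw [h] at h0
        rw [hφ 1] at h0
        have hρ₁ : ρ₁ = 0 := by
          simp [Real.sqrt_zero] at h0; linarith
        apply stmt9_aux ζ ρ₂ hζ
        intro t ht
        have hmem : 1 - t ∈ Set.Icc (0:ℝ) 1 := ⟨by linarith [ht.2], by linarith [ht.1]⟩
        have hle := hub (1 - t) hmem
        rw [hφ (1 - t), hρ₁] at hle
        have hle2 : ζ * Real.sqrt ((1 - t) * (1 - (1 - t))) ≤ (1 - (1 - t)) * ρ₂ := by
          linarith
        calc ζ * Real.sqrt (t * (1 - t))
            = ζ * Real.sqrt ((1 - t) * (1 - (1 - t))) := by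
              rw [show t * (1 - t) = (1 - t) * (1 - (1 - t)) by ring]
          _ ≤ (1 - (1 - t)) * ρ₂ := hle2
          _ = t * ρ₂ := by ring
  set s := Real.sqrt (tb * (1 - tb)) with hsdef
  have hprod : 0 < tb * (1 - tb) := mul_pos hIoo.1 (by linarith [hIoo.2])
  have hs : 0 < s := Real.sqrt_pos.2 hprod
  have hs2 : s ^ 2 = tb * (1 - tb) := Real.sq_sqrt (le_of_lt hprod)
  -- derivative of φ at tb is 0
  have hinner : HasDerivAt (fun t : ℝ => t * (1 - t)) (1 - 2 * tb) tb := by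
    have h1 : HasDerivAt (fun t : ℝ => t * (1 - t)) (1 * (1 - tb) + tb * (0 - 1)) tb :=
      (hasDerivAt_id tb).mul ((hasDerivAt_const tb 1).sub (hasDerivAt_id tb))
    convert h1 using 1; ring
  have hsqrt : HasDerivAt (fun t : ℝ => Real.sqrt (t * (1 - t)))
      (1 / (2 * s) * (1 - 2 * tb)) tb :=
    (Real.hasDerivAt_sqrt (ne_of_gt hprod)).comp tb hinner
  have hder : HasDerivAt φ (-ρ₁ + ρ₂ + ζ * (1 / (2 * s) * (1 - 2 * tb))) tb := by
    have hlin : HasDerivAt (fun t : ℝ => -t * ρ₁ - (1 - t) * ρ₂) (-ρ₁ + ρ₂) tb := by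
      have h2 := (((hasDerivAt_id tb).neg.mul_const ρ₁).sub
        (((hasDerivAt_const tb 1).sub (hasDerivAt_id tb)).mul_const ρ₂))
      exact h2.congr_deriv (by ring)
    have hfe : φ = fun t => -t * ρ₁ - (1 - t) * ρ₂ + ζ * Real.sqrt (t * (1 - t)) :=
      funext hφ
    rw [hfe]; exact hlin.add (hsqrt.const_mul ζ)
  have hmax : IsLocalMax φ tb := by
    have hmem : Set.Icc (0:ℝ) 1 ∈ nhds tb := Icc_mem_nhds hIoo.1 hIoo.2
    filter_upwards [hmem] with t ht
    rw [hzero]; exact hub t ht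
  have hD0 : -ρ₁ + ρ₂ + ζ * (1 / (2 * s) * (1 - 2 * tb)) = 0 :=
    hmax.hasDerivAt_eq_zero hder
  have hval : -tb * ρ₁ - (1 - tb) * ρ₂ + ζ * s = 0 := by
    have h3 := hzero; rw [hφ tb] at h3; exact h3
  have hD0' : (-ρ₁ + ρ₂) * (2 * s) + ζ * (1 - 2 * tb) = 0 := by
    field_simp at hD0; linarith
  have hρ₁ : ρ₁ = (1 - tb) * ζ / (2 * s) := by
    rw [eq_div_iff (by positivity)]
    linear_combination (tb - 1) * hD0' - 2 * s * hval + 2 * ζ * hs2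
  have hρ₂ : ρ₂ = tb * ζ / (2 * s) := by
    rw [eq_div_iff (by positivity)]
    linear_combination tb * hD0' - 2 * s * hval + 2 * ζ * hs2
  refine ⟨tb, hIoo, hzero, ?_, hρ₁, hρ₂⟩
  -- uniqueness via strict concavity (midpoint argument)
  intro t ht htz
  by_contra hne
  set m := (t + tb) / 2 with hm
  have hmmem : m ∈ Set.Icc (0:ℝ) 1 := by
    rw [Set.mem_Icc, hm]
    constructor
    · linarith [ht.1, htb.1]
    · linarith [ht.2, htb.2]
  have hφm := hub m hmmem
  rw [hφ m] at hφm
  set a := Real.sqrt (t * (1 - t)) with ha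
  set c := Real.sqrt (m * (1 - m)) with hc
  have ha0 : 0 ≤ a := Real.sqrt_nonneg _
  have ha2 : a ^ 2 = t * (1 - t) := Real.sq_sqrt (by nlinarith [ht.1, ht.2])
  have hc0 : 0 ≤ c := Real.sqrt_nonneg _
  have hc2 : c ^ 2 = m * (1 - m) := Real.sq_sqrt
    (mul_nonneg hmmem.1 (by linarith [hmmem.2]))
  have hgt : (a + s) / 2 < c := by
    have hnez : t - tb ≠ 0 := sub_ne_zero.2 hne
    have h1 : c ^ 2 - ((a + s) / 2) ^ 2 = (a - s)^2 / 4 + (t - tb)^2 / 4 := by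
      rw [hc2, hm]
      linear_combination (-1/2 : ℝ) * ha2 + (-1/2 : ℝ) * hs2
    have h3 : 0 < (t - tb)^2 := by positivity
    have h2 : 0 < c ^ 2 - ((a + s) / 2) ^ 2 := by
      rw [h1]; positivity
    nlinarith [ha0, hs.le, hc0]
  have h1 : -t * ρ₁ - (1 - t) * ρ₂ + ζ * a = 0 := by
    have h4 := htz; rw [hφ t] at h4; exact h4
  have hmid : -m * ρ₁ - (1 - m) * ρ₂
      = (-(t * ρ₁) - (1 - t) * ρ₂ + (-(tb * ρ₁) - (1 - tb) * ρ₂)) / 2 := by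
    rw [hm]; ring
  have hpos : 0 < -m * ρ₁ - (1 - m) * ρ₂ + ζ * c := by
    nlinarith [mul_lt_mul_of_pos_left hgt hζ, h1, hval, hmid]
  linarith
end

section
/- Let H be a real Hilbert space and A: H → H* a map that is strongly monotone (⟨Av - Aw, v - w⟩ ≥ c‖v - w‖² for some c > 0) and Lipschitz continuous (‖Av - Aw‖_{H*} ≤ L‖v - w‖). Then there exists a unique v ∈ H with Av = 0. -/
open InnerProductSpace

set_option maxHeartbeats 1000000

/-- Browder–Minty: a strongly monotone Lipschitz operator from a real Hilbert
space to its dual has a unique zero. -/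
theorem stmt16 (H : Type*) [NormedAddCommGroup H] [InnerProductSpace ℝ H]
    [CompleteSpace H]
    (A : H → StrongDual ℝ H) (c L : ℝ) (hc : 0 < c)
    (hmon : ∀ v w : H, c * ‖v - w‖ ^ 2 ≤ (A v - A w) (v - w))
    (hlip : ∀ v w : H, ‖A v - A w‖ ≤ L * ‖v - w‖) :
    ∃! v : H, A v = 0 := by
  -- uniqueness from strong monotonicity
  have uniq : ∀ v w : H, A v = 0 → A w = 0 → v = w := by
    intro v w hv hw
    have h := hmon v w
    rw [hv, hw, sub_zero] at h
    simp only [ContinuousLinearMap.zero_apply] at h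
    have h2 : ‖v - w‖ ^ 2 ≤ 0 := by nlinarith
    have h3 : ‖v - w‖ ^ 2 = 0 := le_antisymm h2 (sq_nonneg _)
    have h4 : ‖v - w‖ = 0 := by
      have := sq_eq_zero_iff.mp h3
      simpa using this
    exact sub_eq_zero.mp (norm_eq_zero.mp h4)
  by_cases hsub : Subsingleton H
  · refine ⟨0, ?_, fun y _ => Subsingleton.elim y 0⟩
    ext x
    have : x = 0 := Subsingleton.elim x 0
    simp [this]
  -- nontrivial case: L > 0 and c ≤ L
  have : Nontrivial H := not_subsingleton_iff_nontrivial.mp hsub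
  obtain ⟨v₀, w₀, hvw⟩ := exists_pair_ne H
  have hnorm : (0:ℝ) < ‖v₀ - w₀‖ := by
    simpa [norm_pos_iff, sub_eq_zero] using hvw
  have hcL : c ≤ L := by
    have h1 := hmon v₀ w₀
    have h2 : (A v₀ - A w₀) (v₀ - w₀) ≤ ‖A v₀ - A w₀‖ * ‖v₀ - w₀‖ :=
      le_trans (le_abs_self _) ((A v₀ - A w₀).le_opNorm (v₀ - w₀))
    have h3 := hlip v₀ w₀
    nlinarith [mul_le_mul_of_nonneg_right h3 (norm_nonneg (v₀ - w₀)), pow_pos hnorm 2]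
  have hL : (0:ℝ) < L := lt_of_lt_of_le hc hcL
  set t : ℝ := c / L ^ 2 with ht
  have htpos : 0 < t := by positivity
  set J := (toDual ℝ H).symm with hJ
  set f : H → H := fun v => v - t • J (A v) with hf
  -- contraction factor
  have hfac : 0 ≤ 1 - c ^ 2 / L ^ 2 ∧ 1 - c ^ 2 / L ^ 2 < 1 := by
    constructor
    · have : c ^ 2 ≤ L ^ 2 := by nlinarith
      have : c ^ 2 / L ^ 2 ≤ 1 := by
        rw [div_le_one (by positivity)]; exact this
      linarith
    · have : 0 < c ^ 2 / L ^ 2 := by positivity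
      linarith
  set K : NNReal := ⟨Real.sqrt (1 - c ^ 2 / L ^ 2), Real.sqrt_nonneg _⟩ with hK
  have key : ∀ v w : H, ‖f v - f w‖ ^ 2 ≤ (1 - c ^ 2 / L ^ 2) * ‖v - w‖ ^ 2 := by
    intro v w
    have hfe : f v - f w = (v - w) - t • J (A v - A w) := by
      simp only [hf, map_sub, smul_sub]
      abel
    rw [hfe, norm_sub_sq_real, real_inner_smul_right, norm_smul]
    have hin : ⟪v - w, J (A v - A w)⟫_ℝ = (A v - A w) (v - w) := by
      rw [real_inner_comm]; exact toDual_symm_apply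
    have hnJ : ‖J (A v - A w)‖ = ‖A v - A w‖ := (toDual ℝ H).symm.norm_map _
    rw [hin, hnJ]
    have h1 := hmon v w
    have h2 := hlip v w
    have h3 : ‖A v - A w‖ ^ 2 ≤ L ^ 2 * ‖v - w‖ ^ 2 := by
      nlinarith [norm_nonneg (A v - A w), norm_nonneg (v - w)]
    have habs : ‖t‖ = t := abs_of_pos htpos
    rw [habs]
    have ht2 : 1 - 2 * t * c + t ^ 2 * L ^ 2 = 1 - c ^ 2 / L ^ 2 := by
      rw [ht]
      field_simp
      ring
    rw [← ht2]
    have e1 : t * (c * ‖v - w‖ ^ 2) ≤ t * ((A v - A w) (v - w)) :=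
      mul_le_mul_of_nonneg_left h1 htpos.le
    have e2 : t ^ 2 * ‖A v - A w‖ ^ 2 ≤ t ^ 2 * (L ^ 2 * ‖v - w‖ ^ 2) :=
      mul_le_mul_of_nonneg_left h3 (sq_nonneg t)
    nlinarith [e1, e2]
  have hlipf : LipschitzWith K f := by
    apply LipschitzWith.of_dist_le_mul
    intro v w
    rw [dist_eq_norm, dist_eq_norm]
    have hk : (K : ℝ) = Real.sqrt (1 - c ^ 2 / L ^ 2) := rfl
    rw [hk]
    calc ‖f v - f w‖ = Real.sqrt (‖f v - f w‖ ^ 2) := (Real.sqrt_sq (norm_nonneg _)).symm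
      _ ≤ Real.sqrt ((1 - c ^ 2 / L ^ 2) * ‖v - w‖ ^ 2) := Real.sqrt_le_sqrt (key v w)
      _ = Real.sqrt (1 - c ^ 2 / L ^ 2) * ‖v - w‖ := by
          rw [Real.sqrt_mul hfac.1, Real.sqrt_sq (norm_nonneg _)]
  have hcontr : ContractingWith K f := by
    refine ⟨?_, hlipf⟩
    rw [← NNReal.coe_lt_coe]
    show Real.sqrt (1 - c ^ 2 / L ^ 2) < 1
    calc Real.sqrt (1 - c ^ 2 / L ^ 2) < Real.sqrt 1 := by
          apply (Real.sqrt_lt_sqrt hfac.1 hfac.2)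
      _ = 1 := Real.sqrt_one
  have : Nonempty H := ⟨0⟩
  have hfix := hcontr.fixedPoint_isFixedPt
  set v := hcontr.fixedPoint f with hv
  have hA : A v = 0 := by
    have : v - t • J (A v) = v := hfix
    have h0 : t • J (A v) = 0 := by
      have := sub_eq_self.mp this
      exact this
    have hJ0 : J (A v) = 0 := by
      rcases smul_eq_zero.mp h0 with h | h
      · exact absurd h (ne_of_gt htpos)
      · exact h
    have := (toDual ℝ H).symm.injective (a₁ := A v) (a₂ := 0) (by simpa using hJ0)
    exact this
  exact ⟨v, hA, fun w hw => uniq w v hw hA⟩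
end
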